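/- Write α = (β_s, β_t) ∈ Θ := Δ_K × Δ_K, and suppose the SLOTAlign objective F(π, α) satisfies: α ↦ F(π, α) has L_f^α-Lipschitz gradient for every π ∈ C, and π ↦ F(π, α) has L_f^π-Lipschitz gradient (Frobenius norm) for every α ∈ Θ. Let 0 < τ < 1/L_f^α and 0 < η < 1/L_f^π, let (π^k, α^k) ∈ C × Θ with π^k entrywise positive, let α^{k+1} minimize α ↦ ⟨∇_α F(π^k, α^k), α⟩ + (1/(2τ))‖α − α^k‖² over Θ, and let π^{k+1} minimize π ↦ ⟨∇_π F(π^k, α^{k+1}), π⟩ + (1/η)·KL(π‖π^k) over C. Then F(π^{k+1}, α^{k+1}) − F(π^k, α^k) ≤ −κ₁·(‖π^{k+1} − π^k‖_F² + ‖α^{k+1} − α^k‖²), where κ₁ = min(1/(2τ) − L_f^α/2, 1/(2η) − L_f^π/2) > 0. -/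

import Mathlib

open scoped RealInnerProductSpace BigOperators

/-- The Kullback–Leibler divergence between two couplings (viewed as elements of the
Euclidean space of `n×m` arrays), `KL(P‖Q) = Σ_p (P_p log(P_p/Q_p) − P_p + Q_p)`
(with the convention `0·log 0 = 0`, automatic since `Real.log 0 = 0`). -/
noncomputable def vecKL {ι : Type*} [Fintype ι] (P Q : ι → ℝ) : ℝ :=
  ∑ p, (P p * Real.log (P p / Q p) - P p + Q p)

/-- The set `Θ = Δ_K × Δ_K` of concatenated weight vectors `α = (β_s, β_t)`:
all entries are nonnegative and each block sums to `1`. -/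
def weightSet (K : ℕ) : Set (EuclideanSpace ℝ (Fin K ⊕ Fin K)) :=
  {α | (∀ p, 0 ≤ α p) ∧ (∑ q, α (Sum.inl q) = 1) ∧ (∑ q, α (Sum.inr q) = 1)}

/-- The transport polytope with uniform marginals, viewed inside the Euclidean space
of `n×m` arrays (Frobenius norm). -/
def transportSet (n m : ℕ) : Set (EuclideanSpace ℝ (Fin n × Fin m)) :=
  {π | (∀ p, 0 ≤ π p) ∧ (∀ i, ∑ k, π (i, k) = 1 / (n : ℝ)) ∧
    (∀ k, ∑ i, π (i, k) = 1 / (m : ℝ))}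

/-- The SLOTAlign objective `F(π, α)` with `α = (β_s, β_t)`:
`F = (1/n²) Σᵢⱼ (Σ_q βs_q Ds_q(i,j))² + (1/m²) Σₖₗ (Σ_q βt_q Dt_q(k,l))²
  − 2 tr((Σ_q βs_q Ds_q) π (Σ_q βt_q Dt_q) πᵀ)`,
the trace written out as
`Σᵢⱼₖₗ (Σ_q βs_q Ds_q(i,j)) π(j,k) (Σ_q βt_q Dt_q(k,l)) π(i,l)`. -/
noncomputable def slotFE {n m K : ℕ} (Ds : Fin K → Matrix (Fin n) (Fin n) ℝ)
    (Dt : Fin K → Matrix (Fin m) (Fin m) ℝ)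
    (π : EuclideanSpace ℝ (Fin n × Fin m))
    (α : EuclideanSpace ℝ (Fin K ⊕ Fin K)) : ℝ :=
  (1 / (n : ℝ) ^ 2) * ∑ i, ∑ j, (∑ q, α (Sum.inl q) * Ds q i j) ^ 2
  + (1 / (m : ℝ) ^ 2) * ∑ k, ∑ l, (∑ q, α (Sum.inr q) * Dt q k l) ^ 2
  - 2 * ∑ i, ∑ j, ∑ k, ∑ l,
      (∑ q, α (Sum.inl q) * Ds q i j) * π (j, k)
        * (∑ q, α (Sum.inr q) * Dt q k l) * π (i, l)

/-! ### Auxiliary calculus lemmas -/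

/-- For `0 < t ≤ 1`, `(t - 1/t)/2 ≤ log t`. -/
lemma slot_lemA {t : ℝ} (ht : 0 < t) (ht1 : t ≤ 1) : (t - 1/t)/2 ≤ Real.log t := by
  have hd : ∀ x : ℝ, 0 < x → HasDerivAt (fun x : ℝ => Real.log x - x/2 + 1/(2*x))
      (-((x-1)^2/(2*x^2))) x := by
    intro x hx0
    have h := ((Real.hasDerivAt_log hx0.ne').sub
      ((hasDerivAt_id x).div_const 2)).add
      ((((hasDerivAt_id x).const_mul 2).inv (by simpa using hx0.ne')).const_mul 1)
    refine h.congr_deriv ?_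
    simp only [id]
    field_simp
    ring
  have key : AntitoneOn (fun x : ℝ => Real.log x - x/2 + 1/(2*x)) (Set.Icc t 1) := by
    apply antitoneOn_of_hasDerivWithinAt_nonpos (convex_Icc t 1)
      (f' := fun x => -((x-1)^2/(2*x^2)))
    · intro x hx
      exact (hd x (lt_of_lt_of_le ht hx.1)).continuousAt.continuousWithinAt
    · intro x hx
      rw [interior_Icc] at hx
      exact (hd x (lt_of_lt_of_le ht hx.1.le)).hasDerivWithinAt
    · intro x hx
      rw [interior_Icc] at hx
      have hx0 : 0 < x := lt_of_lt_of_le ht hx.1.le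
      have : (0:ℝ) ≤ (x-1)^2/(2*x^2) := by positivity
      linarith
  have h := key (Set.left_mem_Icc.2 ht1) (Set.right_mem_Icc.2 ht1) ht1
  have e1 : Real.log 1 - 1/2 + 1/(2*1) = 0 := by norm_num
  have e2 : (t - 1/t)/2 = t/2 - 1/(2*t) := by field_simp
  simp only [e1] at h
  linarith [h]

/-- For `0 < t ≤ 1`, `log t ≤ (t-1) - (t-1)²/2`. -/
lemma slot_lemB {t : ℝ} (ht : 0 < t) (ht1 : t ≤ 1) :
    Real.log t ≤ (t - 1) - (t-1)^2/2 := by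
  have hd : ∀ x : ℝ, 0 < x → HasDerivAt (fun x : ℝ => Real.log x - (x-1) + (x-1)^2/2)
      ((x-1)^2/x) x := by
    intro x hx0
    have h := ((Real.hasDerivAt_log hx0.ne').sub
      ((hasDerivAt_id x).sub_const 1)).add
      ((((hasDerivAt_id x).sub_const 1).pow 2).div_const 2)
    refine h.congr_deriv ?_
    simp only [id]
    field_simp
    ring
  have key : MonotoneOn (fun x : ℝ => Real.log x - (x-1) + (x-1)^2/2) (Set.Icc t 1) := by
    apply monotoneOn_of_hasDerivWithinAt_nonneg (convex_Icc t 1)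
      (f' := fun x => (x-1)^2/x)
    · intro x hx
      exact (hd x (lt_of_lt_of_le ht hx.1)).continuousAt.continuousWithinAt
    · intro x hx
      rw [interior_Icc] at hx
      exact (hd x (lt_of_lt_of_le ht hx.1.le)).hasDerivWithinAt
    · intro x hx
      rw [interior_Icc] at hx
      have hx0 : 0 < x := lt_of_lt_of_le ht hx.1.le
      positivity
  have h := key (Set.left_mem_Icc.2 ht1) (Set.right_mem_Icc.2 ht1) ht1
  have e1 : Real.log 1 - (1-1) + ((1:ℝ)-1)^2/2 = 0 := by norm_num
  simp only [e1] at h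
  linarith [h]

/-- Pointwise KL vs squared difference inequality for entries in `[0,1]`. -/
lemma slot_kl_point {a b : ℝ} (ha : 0 ≤ a) (ha1 : a ≤ 1) (hb : 0 < b) (hb1 : b ≤ 1) :
    (a - b)^2/2 ≤ a * Real.log (a/b) - a + b := by
  rcases eq_or_lt_of_le ha with h0 | hpos
  · rw [← h0]
    simp
    nlinarith
  · rcases le_total a b with hab | hba
    · have ht : 0 < a/b := div_pos hpos hb
      have ht1 : a/b ≤ 1 := (div_le_one hb).2 hab
      have hlog := slot_lemA ht ht1
      have hmul := mul_le_mul_of_nonneg_left hlog hpos.le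
      have e : a * ((a/b - 1/(a/b))/2) = (a^2 - b^2)/(2*b) := by
        field_simp
      rw [e] at hmul
      have e2 : (a^2 - b^2)/(2*b) - a + b = (a-b)^2/(2*b) := by
        field_simp
        ring
      have e3 : (a-b)^2/2 ≤ (a-b)^2/(2*b) := by
        apply div_le_div_of_nonneg_left (sq_nonneg _) (by positivity)
        linarith
      linarith
    · have ht : 0 < b/a := div_pos hb hpos
      have ht1 : b/a ≤ 1 := (div_le_one hpos).2 hba
      have hlog := slot_lemB ht ht1
      have hmul := mul_le_mul_of_nonneg_left hlog hpos.le
      have e : a * ((b/a - 1) - (b/a - 1)^2/2) = (b - a) - (a-b)^2/(2*a) := by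
        field_simp
        ring
      rw [e] at hmul
      have elog : Real.log (a/b) = - Real.log (b/a) := by
        rw [← Real.log_inv, inv_div]
      have e3 : (a-b)^2/2 ≤ (a-b)^2/(2*a) := by
        apply div_le_div_of_nonneg_left (sq_nonneg _) (by positivity)
        linarith
      rw [elog]
      nlinarith [hmul, e3]

lemma slot_vecKL_self {ι : Type*} [Fintype ι] (P : ι → ℝ) (h : ∀ p, 0 < P p) :
    vecKL P P = 0 := by
  unfold vecKL
  apply Finset.sum_eq_zero
  intro p _
  rw [div_self (h p).ne', Real.log_one]
  ring

lemma slot_normsq_eq {ι : Type*} [Fintype ι] (v : EuclideanSpace ℝ ι) :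
    ‖v‖^2 = ∑ p, (v p)^2 := by
  rw [EuclideanSpace.norm_eq, Real.sq_sqrt (by positivity)]
  simp [Real.norm_eq_abs, sq_abs]

/-- Entries of elements of the transport polytope are at most 1. -/
lemma slot_entry_le_one {n m : ℕ} {P : EuclideanSpace ℝ (Fin n × Fin m)}
    (hP : P ∈ transportSet n m) (p : Fin n × Fin m) : P p ≤ 1 := by
  obtain ⟨hnn, hrow, _⟩ := hP
  have hn : 0 < n := p.1.pos
  have h1 : P p ≤ ∑ k, P (p.1, k) := by
    have := Finset.single_le_sum (f := fun k => P (p.1, k))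
      (fun k _ => hnn (p.1, k)) (Finset.mem_univ p.2)
    simpa using this
  have h2 : (1:ℝ)/n ≤ 1 := by
    rw [div_le_one (by exact_mod_cast hn)]
    exact_mod_cast hn
  calc P p ≤ 1/(n:ℝ) := by rw [← hrow p.1]; exact h1
    _ ≤ 1 := h2

/-- Pinsker-type bound: `½‖P−Q‖² ≤ KL(P‖Q)` on the transport polytope. -/
lemma slot_kl_lower {n m : ℕ} {P Q : EuclideanSpace ℝ (Fin n × Fin m)}
    (hP : P ∈ transportSet n m) (hQ : Q ∈ transportSet n m) (hQpos : ∀ p, 0 < Q p) :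
    1/2 * ‖P - Q‖^2 ≤ vecKL P Q := by
  rw [slot_normsq_eq, Finset.mul_sum]
  unfold vecKL
  apply Finset.sum_le_sum
  intro p _
  have hsub : (P - Q) p = P p - Q p := rfl
  rw [hsub]
  have := slot_kl_point (hP.1 p) (slot_entry_le_one hP p) (hQpos p)
    (slot_entry_le_one hQ p)
  linarith

/-- Descent lemma for a function with Lipschitz gradient. -/
lemma slot_descent_lemma {E : Type*} [NormedAddCommGroup E] [InnerProductSpace ℝ E]
    [CompleteSpace E] (f : E → ℝ) (hf : Differentiable ℝ f) (L : ℝ)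
    (hL : ∀ a b : E, ‖gradient f a - gradient f b‖ ≤ L * ‖a - b‖) (x y : E) :
    f y ≤ f x + ⟪gradient f x, y - x⟫ + L/2 * ‖y - x‖^2 := by
  set d := y - x with hd
  have hline : ∀ t : ℝ, HasDerivAt (fun s : ℝ => f (x + s • d))
      ⟪gradient f (x + t • d), d⟫ t := by
    intro t
    have hc : HasDerivAt (fun s : ℝ => x + s • d) d t := by
      simpa using ((hasDerivAt_id t).smul_const d).const_add x
    have hg : HasGradientAt f (gradient f (x + t • d)) (x + t • d) :=
      (hf _).hasGradientAt
    have hF := hasGradientAt_iff_hasFDerivAt.1 hg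
    have := hF.comp_hasDerivAt t hc
    simpa [InnerProductSpace.toDual_apply_apply, Function.comp_def] using this
  set φ : ℝ → ℝ := fun t => f (x + t • d) - t * ⟪gradient f x, d⟫ - L * t^2/2 * ‖d‖^2
    with hφ
  have hφd : ∀ t : ℝ, HasDerivAt φ
      (⟪gradient f (x + t • d), d⟫ - ⟪gradient f x, d⟫ - L * t * ‖d‖^2) t := by
    intro t
    have h1 := ((hline t).sub ((hasDerivAt_id t).mul_const ⟪gradient f x, d⟫)).sub
      ((((hasDerivAt_id t).pow 2).const_mul L).div_const 2 |>.mul_const (‖d‖^2))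
    refine h1.congr_deriv ?_
    simp only [id, pow_one, Nat.cast_ofNat, mul_one, one_mul]
    ring
  have hanti : AntitoneOn φ (Set.Icc (0:ℝ) 1) := by
    apply antitoneOn_of_hasDerivWithinAt_nonpos (convex_Icc 0 1)
      (f' := fun t => ⟪gradient f (x + t • d), d⟫ - ⟪gradient f x, d⟫ - L * t * ‖d‖^2)
    · intro t ht
      exact (hφd t).continuousAt.continuousWithinAt
    · intro t ht
      exact (hφd t).hasDerivWithinAt
    · intro t ht
      rw [interior_Icc] at ht
      have h1 : ⟪gradient f (x + t • d), d⟫ - ⟪gradient f x, d⟫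
          = ⟪gradient f (x + t • d) - gradient f x, d⟫ := (inner_sub_left _ _ _).symm
      rw [h1]
      have h2 : ⟪gradient f (x + t • d) - gradient f x, d⟫
          ≤ ‖gradient f (x + t • d) - gradient f x‖ * ‖d‖ := real_inner_le_norm _ _
      have h3 : ‖gradient f (x + t • d) - gradient f x‖ ≤ L * (t * ‖d‖) := by
        have := hL (x + t • d) x
        simpa [norm_smul, Real.norm_eq_abs, abs_of_pos ht.1] using this
      have h4 : ‖gradient f (x + t • d) - gradient f x‖ * ‖d‖ ≤ L * (t * ‖d‖) * ‖d‖ :=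
        mul_le_mul_of_nonneg_right h3 (norm_nonneg d)
      have h5 : L * (t * ‖d‖) * ‖d‖ = L * t * ‖d‖^2 := by ring
      linarith
  have h01 := hanti (Set.left_mem_Icc.2 zero_le_one) (Set.right_mem_Icc.2 zero_le_one)
    zero_le_one
  have exy : x + (1:ℝ) • d = y := by rw [one_smul, hd]; abel
  have e0 : φ 0 = f x := by simp [hφ]
  have e1 : φ 1 = f y - ⟪gradient f x, d⟫ - L/2 * ‖d‖^2 := by
    simp only [hφ, exy]
    ring
  rw [e0, e1] at h01
  linarith

@[fun_prop]
lemma slot_proj_diff {ι : Type*} [Fintype ι] (p : ι) :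
    Differentiable ℝ (fun x : EuclideanSpace ℝ ι => x p) :=
  (EuclideanSpace.proj (𝕜 := ℝ) p).differentiable

lemma slotFE_diff_alpha {n m K : ℕ} (Ds : Fin K → Matrix (Fin n) (Fin n) ℝ)
    (Dt : Fin K → Matrix (Fin m) (Fin m) ℝ) (π : EuclideanSpace ℝ (Fin n × Fin m)) :
    Differentiable ℝ (fun x : EuclideanSpace ℝ (Fin K ⊕ Fin K) => slotFE Ds Dt π x) := by
  unfold slotFE
  fun_prop

lemma slotFE_diff_pi {n m K : ℕ} (Ds : Fin K → Matrix (Fin n) (Fin n) ℝ)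
    (Dt : Fin K → Matrix (Fin m) (Fin m) ℝ) (α : EuclideanSpace ℝ (Fin K ⊕ Fin K)) :
    Differentiable ℝ (fun x : EuclideanSpace ℝ (Fin n × Fin m) => slotFE Ds Dt x α) := by
  unfold slotFE
  fun_prop

/-- Combined sufficient decrease of one SLOTAlign iteration: with
block gradient Lipschitz moduli `Lα` (in `α`, for every `π ∈ C`) and `Lπ` (in `π`,
for every `α ∈ Θ`), step sizes `0 < τ < 1/Lα`, `0 < η < 1/Lπ`, and updates
`α^{k+1} = argmin_{α∈Θ} {⟨∇_α F(π^k, α^k), α⟩ + (1/(2τ))‖α − α^k‖²}`,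
`π^{k+1} = argmin_{π∈C} {⟨∇_π F(π^k, α^{k+1}), π⟩ + (1/η)KL(π‖π^k)}`,
one has `F(π^{k+1}, α^{k+1}) − F(π^k, α^k) ≤ −κ₁(‖π^{k+1} − π^k‖_F² + ‖α^{k+1} − α^k‖²)`
with `κ₁ = min(1/(2τ) − Lα/2, 1/(2η) − Lπ/2) > 0`. -/
theorem slotalign_sufficient_decrease (n m K : ℕ)
    (Ds : Fin K → Matrix (Fin n) (Fin n) ℝ)
    (Dt : Fin K → Matrix (Fin m) (Fin m) ℝ)
    (Lα Lπ τ η : ℝ)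
    (hLα : ∀ π ∈ transportSet n m, ∀ a b : EuclideanSpace ℝ (Fin K ⊕ Fin K),
      ‖gradient (fun x => slotFE Ds Dt π x) a - gradient (fun x => slotFE Ds Dt π x) b‖
        ≤ Lα * ‖a - b‖)
    (hLπ : ∀ α ∈ weightSet K, ∀ p q : EuclideanSpace ℝ (Fin n × Fin m),
      ‖gradient (fun x => slotFE Ds Dt x α) p - gradient (fun x => slotFE Ds Dt x α) q‖
        ≤ Lπ * ‖p - q‖)
    (hτ : 0 < τ) (hτ' : τ < 1 / Lα) (hη : 0 < η) (hη' : η < 1 / Lπ)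
    (πk πk1 : EuclideanSpace ℝ (Fin n × Fin m))
    (αk αk1 : EuclideanSpace ℝ (Fin K ⊕ Fin K))
    (hπk : πk ∈ transportSet n m) (hπkpos : ∀ p, 0 < πk p)
    (hπk1 : πk1 ∈ transportSet n m)
    (hαk : αk ∈ weightSet K) (hαk1 : αk1 ∈ weightSet K)
    (hαmin : ∀ a ∈ weightSet K,
      ⟪gradient (fun x => slotFE Ds Dt πk x) αk, αk1⟫ + 1 / (2 * τ) * ‖αk1 - αk‖ ^ 2
        ≤ ⟪gradient (fun x => slotFE Ds Dt πk x) αk, a⟫ + 1 / (2 * τ) * ‖a - αk‖ ^ 2)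
    (hπmin : ∀ p ∈ transportSet n m,
      ⟪gradient (fun x => slotFE Ds Dt x αk1) πk, πk1⟫ + (1 / η) * vecKL πk1 πk
        ≤ ⟪gradient (fun x => slotFE Ds Dt x αk1) πk, p⟫ + (1 / η) * vecKL p πk) :
    slotFE Ds Dt πk1 αk1 - slotFE Ds Dt πk αk
      ≤ -(min (1 / (2 * τ) - Lα / 2) (1 / (2 * η) - Lπ / 2))
          * (‖πk1 - πk‖ ^ 2 + ‖αk1 - αk‖ ^ 2) := by
  set A := ‖αk1 - αk‖ ^ 2 with hA
  set B := ‖πk1 - πk‖ ^ 2 with hB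
  have hA0 : 0 ≤ A := by positivity
  have hB0 : 0 ≤ B := by positivity
  -- α step
  have h1 : ⟪gradient (fun x => slotFE Ds Dt πk x) αk, αk1⟫ + 1 / (2 * τ) * A
      ≤ ⟪gradient (fun x => slotFE Ds Dt πk x) αk, αk⟫ := by
    have := hαmin αk hαk
    simpa using this
  have hinner1 : ⟪gradient (fun x => slotFE Ds Dt πk x) αk, αk1 - αk⟫
      ≤ -(1 / (2 * τ) * A) := by
    rw [inner_sub_right]
    linarith
  have hdesc1 : slotFE Ds Dt πk αk1 ≤ slotFE Ds Dt πk αk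
      + ⟪gradient (fun x => slotFE Ds Dt πk x) αk, αk1 - αk⟫ + Lα / 2 * A :=
    slot_descent_lemma _ (slotFE_diff_alpha Ds Dt πk) Lα (hLα πk hπk) αk αk1
  -- π step
  have hKLself : vecKL πk πk = 0 := slot_vecKL_self πk hπkpos
  have h2 : ⟪gradient (fun x => slotFE Ds Dt x αk1) πk, πk1⟫ + (1 / η) * vecKL πk1 πk
      ≤ ⟪gradient (fun x => slotFE Ds Dt x αk1) πk, πk⟫ := by
    have := hπmin πk hπk
    rwa [hKLself, mul_zero, add_zero] at this
  have hKL : 1 / 2 * B ≤ vecKL πk1 πk := slot_kl_lower hπk1 hπk hπkpos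
  have hKL' : (1 / η) * (1 / 2 * B) ≤ (1 / η) * vecKL πk1 πk :=
    mul_le_mul_of_nonneg_left hKL (by positivity)
  have hinner2 : ⟪gradient (fun x => slotFE Ds Dt x αk1) πk, πk1 - πk⟫
      ≤ -((1 / η) * (1 / 2 * B)) := by
    rw [inner_sub_right]
    linarith
  have hdesc2 : slotFE Ds Dt πk1 αk1 ≤ slotFE Ds Dt πk αk1
      + ⟪gradient (fun x => slotFE Ds Dt x αk1) πk, πk1 - πk⟫ + Lπ / 2 * B :=
    slot_descent_lemma _ (slotFE_diff_pi Ds Dt αk1) Lπ (hLπ αk1 hαk1) πk πk1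
  -- combine
  have eη : (1 / η) * (1 / 2 * B) = 1 / (2 * η) * B := by
    field_simp
  have hc1 : slotFE Ds Dt πk αk1 ≤ slotFE Ds Dt πk αk - (1 / (2 * τ) - Lα / 2) * A := by
    have : -(1 / (2 * τ) * A) + Lα / 2 * A = -((1 / (2 * τ) - Lα / 2) * A) := by ring
    linarith
  have hc2 : slotFE Ds Dt πk1 αk1 ≤ slotFE Ds Dt πk αk1
      - (1 / (2 * η) - Lπ / 2) * B := by
    have : -((1 / η) * (1 / 2 * B)) + Lπ / 2 * B = -((1 / (2 * η) - Lπ / 2) * B) := by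
      rw [eη]; ring
    linarith
  set c1 := 1 / (2 * τ) - Lα / 2 with hc1d
  set c2 := 1 / (2 * η) - Lπ / 2 with hc2d
  have hm1 : min c1 c2 * A ≤ c1 * A := mul_le_mul_of_nonneg_right (min_le_left _ _) hA0
  have hm2 : min c1 c2 * B ≤ c2 * B := mul_le_mul_of_nonneg_right (min_le_right _ _) hB0
  have hexp : -(min c1 c2) * (B + A) = -(min c1 c2 * B) - (min c1 c2 * A) := by ring
  rw [hexp]
  linarith
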